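/- For all vectors a, b in ℝ^n and all real q ≥ 2, the inner product ⟨|b|^(q-2)·b − |a|^(q-2)·a, b − a⟩ is at least 2^(2−q)·|b − a|^q. -/

import Mathlib

open RealInnerProductSpace

theorem vector_inequality (n : ℕ) (a b : EuclideanSpace ℝ (Fin n)) (q : ℝ) (hq : 2 ≤ q) :
    (2 : ℝ) ^ (2 - q) * ‖b - a‖ ^ q ≤
      ⟪(‖b‖ ^ (q - 2)) • b - (‖a‖ ^ (q - 2)) • a, b - a⟫ := by
  by_cases hab : b = a
  · subst hab
    simp [Real.zero_rpow (show q ≠ 0 by linarith)]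
  set r := q - 2 with hrdef
  have hr0 : 0 ≤ r := by linarith
  set d := b - a with hddef
  have hd0 : d ≠ 0 := sub_ne_zero.mpr hab
  have hdn : 0 < ‖d‖ := norm_pos_iff.mpr hd0
  set u : ℝ := ⟪b, d⟫ with hu
  set v : ℝ := -⟪a, d⟫ with hv
  have huv : u + v = ‖d‖ ^ 2 := by
    rw [hu, hv, ← real_inner_self_eq_norm_sq, hddef, inner_sub_left]
    ring
  have expand : ⟪(‖b‖ ^ r) • b - (‖a‖ ^ r) • a, d⟫ = ‖b‖ ^ r * u + ‖a‖ ^ r * v := by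
    rw [inner_sub_left, real_inner_smul_left, real_inner_smul_left, hu, hv]
    ring
  have h2q : (2 : ℝ) ^ (2 - q) = 2 ^ (-r) := by rw [hrdef]; ring_nf
  have hdq : ‖d‖ ^ q = ‖d‖ ^ r * ‖d‖ ^ (2:ℕ) := by
    rw [show q = r + 2 by rw [hrdef]; ring, Real.rpow_add hdn]
    congr 1
    rw [show (2:ℝ) = ((2:ℕ):ℝ) by norm_num, Real.rpow_natCast]
  rw [expand, h2q, hdq]
  have hD2 : (0:ℝ) < ‖d‖ ^ (2:ℕ) := by positivity
  have hub : u ≤ ‖b‖ * ‖d‖ := real_inner_le_norm b d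
  have hva : v ≤ ‖a‖ * ‖d‖ := by
    rw [hv]
    calc -⟪a, d⟫ = ⟪-a, d⟫ := by rw [inner_neg_left]
    _ ≤ ‖-a‖ * ‖d‖ := real_inner_le_norm _ _
    _ = ‖a‖ * ‖d‖ := by rw [norm_neg]
  have hsq : ‖b‖ ^ (2:ℕ) - ‖a‖ ^ (2:ℕ) = u - v := by
    rw [← real_inner_self_eq_norm_sq, ← real_inner_self_eq_norm_sq, hu, hv, hddef,
      inner_sub_right, inner_sub_right, real_inner_comm a b]
    ring
  rcases le_or_gt v 0 with hv0 | hv0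
  · -- v ≤ 0
    have hu0 : ‖d‖ ^ (2:ℕ) ≤ u := by linarith
    have hba : ‖a‖ ≤ ‖b‖ := by nlinarith [norm_nonneg a, norm_nonneg b]
    have hdb : ‖d‖ ≤ ‖b‖ := by nlinarith
    have h1 : (2:ℝ) ^ (-r) ≤ 1 := Real.rpow_le_one_of_one_le_of_nonpos one_le_two (by linarith)
    have h2 : ‖d‖ ^ r ≤ ‖b‖ ^ r := Real.rpow_le_rpow hdn.le hdb hr0
    have h3 : ‖a‖ ^ r ≤ ‖b‖ ^ r := Real.rpow_le_rpow (norm_nonneg a) hba hr0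
    calc (2:ℝ) ^ (-r) * (‖d‖ ^ r * ‖d‖ ^ (2:ℕ)) ≤ 1 * (‖b‖ ^ r * ‖d‖ ^ (2:ℕ)) :=
          mul_le_mul h1 (mul_le_mul_of_nonneg_right h2 hD2.le) (by positivity) zero_le_one
    _ = ‖b‖ ^ r * (u + v) := by rw [one_mul, huv]
    _ = ‖b‖ ^ r * u + ‖b‖ ^ r * v := mul_add _ _ _
    _ ≤ ‖b‖ ^ r * u + ‖a‖ ^ r * v := by
          have := mul_le_mul_of_nonpos_right h3 hv0
          linarith
  rcases le_or_gt u 0 with hu0 | hu0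
  · -- u ≤ 0
    have hv2 : ‖d‖ ^ (2:ℕ) ≤ v := by linarith
    have hba : ‖b‖ ≤ ‖a‖ := by nlinarith [norm_nonneg a, norm_nonneg b]
    have hda : ‖d‖ ≤ ‖a‖ := by nlinarith
    have h1 : (2:ℝ) ^ (-r) ≤ 1 := Real.rpow_le_one_of_one_le_of_nonpos one_le_two (by linarith)
    have h2 : ‖d‖ ^ r ≤ ‖a‖ ^ r := Real.rpow_le_rpow hdn.le hda hr0
    have h3 : ‖b‖ ^ r ≤ ‖a‖ ^ r := Real.rpow_le_rpow (norm_nonneg b) hba hr0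
    calc (2:ℝ) ^ (-r) * (‖d‖ ^ r * ‖d‖ ^ (2:ℕ)) ≤ 1 * (‖a‖ ^ r * ‖d‖ ^ (2:ℕ)) :=
          mul_le_mul h1 (mul_le_mul_of_nonneg_right h2 hD2.le) (by positivity) zero_le_one
    _ = ‖a‖ ^ r * (u + v) := by rw [one_mul, huv]
    _ = ‖a‖ ^ r * u + ‖a‖ ^ r * v := mul_add _ _ _
    _ ≤ ‖b‖ ^ r * u + ‖a‖ ^ r * v := by
          have := mul_le_mul_of_nonpos_right h3 hu0
          linarith
  · -- 0 < u, 0 < v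
    set p := r + 1 with hpdef
    have hp1 : (1:ℝ) ≤ p := by rw [hpdef]; linarith
    have hdr : (0:ℝ) < ‖d‖ ^ r := Real.rpow_pos_of_pos hdn r
    have hb1 : u / ‖d‖ ≤ ‖b‖ := (div_le_iff₀ hdn).mpr hub
    have ha1 : v / ‖d‖ ≤ ‖a‖ := (div_le_iff₀ hdn).mpr hva
    have hs1 : u ^ p / ‖d‖ ^ r ≤ ‖b‖ ^ r * u := by
      have h5 : (u / ‖d‖) ^ r ≤ ‖b‖ ^ r := Real.rpow_le_rpow (by positivity) hb1 hr0
      calc u ^ p / ‖d‖ ^ r = (u / ‖d‖) ^ r * u := by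
            rw [hpdef, Real.rpow_add_one (ne_of_gt hu0), Real.div_rpow hu0.le hdn.le]
            ring
      _ ≤ ‖b‖ ^ r * u := mul_le_mul_of_nonneg_right h5 hu0.le
    have hs2 : v ^ p / ‖d‖ ^ r ≤ ‖a‖ ^ r * v := by
      have h5 : (v / ‖d‖) ^ r ≤ ‖a‖ ^ r := Real.rpow_le_rpow (by positivity) ha1 hr0
      calc v ^ p / ‖d‖ ^ r = (v / ‖d‖) ^ r * v := by
            rw [hpdef, Real.rpow_add_one (ne_of_gt hv0), Real.div_rpow hv0.le hdn.le]
            ring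
      _ ≤ ‖a‖ ^ r * v := mul_le_mul_of_nonneg_right h5 hv0.le
    have hconv : ((u + v) / 2) ^ p ≤ (u ^ p + v ^ p) / 2 := by
      have h6 := (convexOn_rpow hp1).2 (Set.mem_Ici.mpr hu0.le) (Set.mem_Ici.mpr hv0.le)
        (by norm_num : (0:ℝ) ≤ (1/2:ℝ)) (by norm_num : (0:ℝ) ≤ (1/2:ℝ)) (by norm_num)
      simp only [smul_eq_mul] at h6
      calc ((u + v) / 2) ^ p = (1/2 * u + 1/2 * v) ^ p := by ring_nf
      _ ≤ 1/2 * u ^ p + 1/2 * v ^ p := h6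
      _ = (u ^ p + v ^ p) / 2 := by ring
    have hmid : ((u + v) / 2) ^ p = ‖d‖ ^ r * ‖d‖ ^ (2:ℕ) * ‖d‖ ^ r / 2 ^ p := by
      rw [huv, Real.div_rpow (by positivity) (by norm_num)]
      congr 1
      rw [← Real.rpow_natCast ‖d‖ 2, ← Real.rpow_mul hdn.le,
        ← Real.rpow_add hdn, ← Real.rpow_add hdn]
      congr 1
      push_cast
      rw [hpdef]; ring
    have h2pp : (0:ℝ) < 2 ^ p := Real.rpow_pos_of_pos (by norm_num) p
    have h2p : (2:ℝ) ^ (-r) = 2 / 2 ^ p := by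
      rw [hpdef, Real.rpow_add (by norm_num : (0:ℝ) < 2), Real.rpow_one,
        Real.rpow_neg (by norm_num : (0:ℝ) ≤ 2)]
      field_simp
    have hfinal : (2:ℝ) ^ (-r) * (‖d‖ ^ r * ‖d‖ ^ (2:ℕ)) * ‖d‖ ^ r ≤ u ^ p + v ^ p := by
      have h7 : ‖d‖ ^ r * ‖d‖ ^ (2:ℕ) * ‖d‖ ^ r / 2 ^ p ≤ (u ^ p + v ^ p) / 2 := hmid ▸ hconv
      rw [h2p]
      calc 2 / 2 ^ p * (‖d‖ ^ r * ‖d‖ ^ (2:ℕ)) * ‖d‖ ^ r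
          = 2 * (‖d‖ ^ r * ‖d‖ ^ (2:ℕ) * ‖d‖ ^ r / 2 ^ p) := by field_simp
      _ ≤ 2 * ((u ^ p + v ^ p) / 2) := by linarith
      _ = u ^ p + v ^ p := by ring
    calc (2:ℝ) ^ (-r) * (‖d‖ ^ r * ‖d‖ ^ (2:ℕ))
        = (2:ℝ) ^ (-r) * (‖d‖ ^ r * ‖d‖ ^ (2:ℕ)) * ‖d‖ ^ r / ‖d‖ ^ r := by field_simp
    _ ≤ (u ^ p + v ^ p) / ‖d‖ ^ r := (div_le_div_iff_of_pos_right hdr).mpr hfinal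
    _ = u ^ p / ‖d‖ ^ r + v ^ p / ‖d‖ ^ r := add_div _ _ _
    _ ≤ ‖b‖ ^ r * u + ‖a‖ ^ r * v := add_le_add hs1 hs2
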